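/- Let (V_0, ‖·‖_{V_0}) and (V_1, ‖·‖_{V_1}) be separable ℝ-Banach spaces with V_1 ⊆ V_0 continuously and densely, let T ∈ (0,∞), λ ∈ ℝ, p ∈ [1,∞), let (Ω, F, P, (F_t)_{t∈[0,T]}) be a filtered probability space, let L be the set of all Pred((F_t)_{t∈[0,T]})/B(V_0)-measurable processes X : [0,T] × Ω → V_0 such that X((0,T] × Ω) ⊆ V_1 and ‖X_0‖_{L^p(P;V_0)} + sup_{t∈(0,T]} t^λ ‖X_t‖_{L^p(P;V_1)} < ∞, and for X ∈ L set |X|_L = ‖X_0‖_{L^p(P;V_0)} + sup_{t∈(0,T]} [ t^λ ‖X_t‖_{L^p(P;V_1)} ]. If X^N ∈ L, N ∈ ℕ, is a sequence with limsup_{N→∞} sup_{n,m∈ℕ∩[N,∞)} |X^n − X^m|_L = 0, then there exists Y ∈ L such that limsup_{N→∞} |X^N − Y|_L = 0. -/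

import Mathlib

open MeasureTheory Filter Set
open scoped ENNReal

noncomputable section

/-- The predictable σ-algebra `Pred((𝓕_t)_{t ∈ [0,T]})` on `[0,T] × Ω` associated to a
filtration `𝓕`, generated by the sets `(s,t] × A` with `0 ≤ s < t ≤ T`, `A ∈ 𝓕 s`,
together with the sets `{0} × A` with `A ∈ 𝓕 0`. -/
def Pred {Ω : Type*} (𝓕 : ℝ → MeasurableSpace Ω) (T : ℝ) :
    MeasurableSpace (Set.Icc (0:ℝ) T × Ω) :=
  MeasurableSpace.generateFrom
    ({S : Set (Set.Icc (0:ℝ) T × Ω) | ∃ s t : ℝ, ∃ A : Set Ω,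
        0 ≤ s ∧ s < t ∧ t ≤ T ∧ MeasurableSet[𝓕 s] A ∧
        S = {p : Set.Icc (0:ℝ) T × Ω | s < (p.1 : ℝ) ∧ (p.1 : ℝ) ≤ t ∧ p.2 ∈ A}} ∪
     {S : Set (Set.Icc (0:ℝ) T × Ω) | ∃ A : Set Ω, MeasurableSet[𝓕 0] A ∧
        S = {p : Set.Icc (0:ℝ) T × Ω | (p.1 : ℝ) = 0 ∧ p.2 ∈ A}})

/-- The weighted norm `|X|_𝓛 = ‖X_0‖_{L^p(P;V₀)} + sup_{t∈(0,T]} t^λ ‖X_t‖_{L^p(P;V₁)}`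
of a process `U : [0,T] × Ω → V₀` whose restriction to `(0,T] × Ω` takes values in `V₁`
and is there given by the `V₁`-valued process `U₁`. -/
def Lnorm {Ω V₀ V₁ : Type*} [MeasurableSpace Ω]
    [NormedAddCommGroup V₀] [NormedAddCommGroup V₁]
    (P : Measure Ω) (T : ℝ) (hT : 0 ≤ T) (p lam : ℝ)
    (U : Set.Icc (0:ℝ) T → Ω → V₀) (U₁ : Set.Icc (0:ℝ) T → Ω → V₁) : ℝ≥0∞ :=
  eLpNorm (U ⟨0, Set.left_mem_Icc.mpr hT⟩) (ENNReal.ofReal p) P +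
    ⨆ (t : Set.Icc (0:ℝ) T) (_ : 0 < (t : ℝ)),
      ENNReal.ofReal ((t : ℝ) ^ lam) * eLpNorm (U₁ t) (ENNReal.ofReal p) P

open scoped Classical in
/-- pointwise limit with junk value 0 -/
def dlim {α E : Type*} [Zero E] [TopologicalSpace E] (f : ℕ → α → E) (x : α) : E :=
  if h : ∃ c, Filter.Tendsto (fun k => f k x) Filter.atTop (nhds c) then h.choose else 0

open scoped Classical in
lemma tendsto_dlim {α E : Type*} [Zero E] [TopologicalSpace E] {f : ℕ → α → E} {x : α}
    (h : ∃ c, Filter.Tendsto (fun k => f k x) Filter.atTop (nhds c)) :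
    Filter.Tendsto (fun k => f k x) Filter.atTop (nhds (dlim f x)) := by
  rw [dlim, dif_pos h]; exact h.choose_spec

open scoped Classical in
lemma measurable_dlim {α E : Type*} {mα : MeasurableSpace α} [MeasurableSpace E]
    [TopologicalSpace E] [PolishSpace E] [BorelSpace E] [Zero E]
    (f : ℕ → α → E) (hf : ∀ k, Measurable (f k)) : Measurable (dlim f) := by
  have hS : MeasurableSet {x | ∃ c, Filter.Tendsto (fun k => f k x) Filter.atTop (nhds c)} :=
    measurableSet_exists_tendsto hf
  set f' : ℕ → α → E := fun k x =>
    if x ∈ {x | ∃ c, Filter.Tendsto (fun k => f k x) Filter.atTop (nhds c)} then f k x else 0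
    with hf'def
  have hf' : ∀ k, Measurable (f' k) := fun k => Measurable.ite hS (hf k) measurable_const
  apply measurable_of_tendsto_metrizable' Filter.atTop hf'
  rw [tendsto_pi_nhds]
  intro x
  by_cases h : ∃ c, Filter.Tendsto (fun k => f k x) Filter.atTop (nhds c)
  · have h1 : ∀ k, f' k x = f k x := fun k => by simp only [hf'def, Set.mem_setOf_eq, h, if_true]
    simp only [h1]
    exact tendsto_dlim h
  · have h1 : ∀ k, f' k x = 0 := fun k => by simp only [hf'def, Set.mem_setOf_eq, h, if_false]
    simp only [h1, dlim, dif_neg h]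
    exact tendsto_const_nhds

lemma measurable_slice {Ω V : Type*} {m : MeasurableSpace Ω} [MeasurableSpace V]
    {𝓕 : ℝ → MeasurableSpace Ω} {T : ℝ} (h_le : ∀ t : ℝ, 𝓕 t ≤ m)
    {F : Set.Icc (0:ℝ) T × Ω → V} (hF : Measurable[Pred 𝓕 T] F) (t : Set.Icc (0:ℝ) T) :
    Measurable fun ω => F (t, ω) := by
  have hmap : @Measurable Ω _ m (Pred 𝓕 T) (fun ω => ((t, ω) : Set.Icc (0:ℝ) T × Ω)) := by
    refine measurable_generateFrom ?_
    rintro S (⟨s, u, A, hs, hsu, huT, hA, rfl⟩ | ⟨A, hA, rfl⟩)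
    · by_cases h1 : s < (t:ℝ) ∧ (t:ℝ) ≤ u
      · have he : (fun ω => ((t, ω) : Set.Icc (0:ℝ) T × Ω)) ⁻¹'
            {p : Set.Icc (0:ℝ) T × Ω | s < (p.1:ℝ) ∧ (p.1:ℝ) ≤ u ∧ p.2 ∈ A} = A := by
          ext ω; simp [h1.1, h1.2]
        rw [he]; exact h_le s A hA
      · have he : (fun ω => ((t, ω) : Set.Icc (0:ℝ) T × Ω)) ⁻¹'
            {p : Set.Icc (0:ℝ) T × Ω | s < (p.1:ℝ) ∧ (p.1:ℝ) ≤ u ∧ p.2 ∈ A} = ∅ := by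
          ext ω
          simp only [Set.mem_preimage, Set.mem_setOf_eq, Set.mem_empty_iff_false, iff_false]
          intro hcon
          exact h1 ⟨hcon.1, hcon.2.1⟩
        rw [he]; exact MeasurableSet.empty
    · by_cases h1 : (t:ℝ) = 0
      · have he : (fun ω => ((t, ω) : Set.Icc (0:ℝ) T × Ω)) ⁻¹'
            {p : Set.Icc (0:ℝ) T × Ω | (p.1:ℝ) = 0 ∧ p.2 ∈ A} = A := by
          ext ω; simp [h1]
        rw [he]; exact h_le 0 A hA
      · have he : (fun ω => ((t, ω) : Set.Icc (0:ℝ) T × Ω)) ⁻¹'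
            {p : Set.Icc (0:ℝ) T × Ω | (p.1:ℝ) = 0 ∧ p.2 ∈ A} = ∅ := by
          ext ω
          simp only [Set.mem_preimage, Set.mem_setOf_eq, Set.mem_empty_iff_false, iff_false]
          intro hcon; exact h1 hcon.1
        rw [he]; exact MeasurableSet.empty
  exact hF.comp hmap

/-- **Completeness of the weighted space of predictable processes with a singularity at
the initial time.**  If `V₁ ⊆ V₀` continuously and densely (separable ℝ-Banach spaces),
`T ∈ (0,∞)`, `λ ∈ ℝ`, `p ∈ [1,∞)`, and `(X^N)_{N∈ℕ}` is a sequence in the space `𝓛` of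
predictable processes `X : [0,T] × Ω → V₀` with `X((0,T] × Ω) ⊆ V₁` and
`|X|_𝓛 = ‖X_0‖_{L^p(P;V₀)} + sup_{t∈(0,T]} t^λ ‖X_t‖_{L^p(P;V₁)} < ∞`
which is Cauchy in the sense that `limsup_{N→∞} sup_{n,m≥N} |X^n − X^m|_𝓛 = 0`,
then there exists `Y ∈ 𝓛` with `limsup_{N→∞} |X^N − Y|_𝓛 = 0`.
(The inclusion `V₁ ⊆ V₀` is encoded by the injective dense continuous linear map `ι`,
and membership of values in `V₁` by the lifted processes `X₁`, `Y₁`.) -/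
theorem weighted_predictable_space_complete
    {Ω V₀ V₁ : Type*} [m : MeasurableSpace Ω]
    [NormedAddCommGroup V₀] [NormedSpace ℝ V₀] [CompleteSpace V₀]
    [TopologicalSpace.SeparableSpace V₀]
    [NormedAddCommGroup V₁] [NormedSpace ℝ V₁] [CompleteSpace V₁]
    [TopologicalSpace.SeparableSpace V₁]
    [MeasurableSpace V₀] [BorelSpace V₀]
    (ι : V₁ →L[ℝ] V₀) (hι : Function.Injective ι) (hdense : DenseRange ι)
    (T : ℝ) (hT : 0 < T) (lam p : ℝ) (hp : 1 ≤ p)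
    (P : Measure Ω) [IsProbabilityMeasure P]
    (𝓕 : ℝ → MeasurableSpace Ω)
    (h_le : ∀ t : ℝ, 𝓕 t ≤ m)
    (h_mono : ∀ s t : ℝ, s ≤ t → 𝓕 s ≤ 𝓕 t)
    (X : ℕ → Set.Icc (0:ℝ) T → Ω → V₀)
    (X₁ : ℕ → Set.Icc (0:ℝ) T → Ω → V₁)
    (hX_pred : ∀ n : ℕ,
      Measurable[Pred 𝓕 T] (fun q : Set.Icc (0:ℝ) T × Ω => X n q.1 q.2))
    (hX_val : ∀ (n : ℕ) (t : Set.Icc (0:ℝ) T), 0 < (t : ℝ) → ∀ ω : Ω,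
      X n t ω = ι (X₁ n t ω))
    (hX_fin : ∀ n : ℕ, Lnorm P T hT.le p lam (X n) (X₁ n) < ⊤)
    (hCauchy : Filter.limsup (fun N : ℕ =>
        ⨆ (n : ℕ) (_ : N ≤ n) (k : ℕ) (_ : N ≤ k),
          Lnorm P T hT.le p lam (fun t ω => X n t ω - X k t ω)
            (fun t ω => X₁ n t ω - X₁ k t ω)) Filter.atTop = 0) :
    ∃ (Y : Set.Icc (0:ℝ) T → Ω → V₀) (Y₁ : Set.Icc (0:ℝ) T → Ω → V₁),
      Measurable[Pred 𝓕 T] (fun q : Set.Icc (0:ℝ) T × Ω => Y q.1 q.2) ∧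
      (∀ (t : Set.Icc (0:ℝ) T), 0 < (t : ℝ) → ∀ ω : Ω, Y t ω = ι (Y₁ t ω)) ∧
      Lnorm P T hT.le p lam Y Y₁ < ⊤ ∧
      Filter.limsup (fun N : ℕ =>
        Lnorm P T hT.le p lam (fun t ω => X N t ω - Y t ω)
          (fun t ω => X₁ N t ω - Y₁ t ω)) Filter.atTop = 0 := by
  classical
  borelize V₁
  haveI : SecondCountableTopology V₀ := UniformSpace.secondCountable_of_separable V₀
  haveI : SecondCountableTopology V₁ := UniformSpace.secondCountable_of_separable V₁
  set q : ℝ≥0∞ := ENNReal.ofReal p with hqdef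
  have hq1 : 1 ≤ q := ENNReal.one_le_ofReal.mpr hp
  set t0 : Set.Icc (0:ℝ) T := ⟨0, Set.left_mem_Icc.mpr hT.le⟩ with ht0
  -- retraction
  have hemb : MeasurableEmbedding (⇑ι) := ι.continuous.measurableEmbedding hι
  set g : V₀ → V₁ := Function.extend (⇑ι) id (fun _ => 0) with hgdef
  have hgmeas : Measurable g := hemb.measurable_extend measurable_id measurable_const
  have hgι : ∀ x : V₁, g (ι x) = x := fun x => hι.extend_apply _ _ _
  -- slices measurable
  have hXm : ∀ n t, Measurable (X n t) := fun n t => measurable_slice h_le (hX_pred n) t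
  have hX₁m : ∀ n (t : Set.Icc (0:ℝ) T), 0 < (t:ℝ) → Measurable (X₁ n t) := by
    intro n t ht
    have he : X₁ n t = fun ω => g (X n t ω) := funext fun ω => by rw [hX_val n t ht ω, hgι]
    rw [he]; exact hgmeas.comp (hXm n t)
  -- weights
  have hc_pos : ∀ t : Set.Icc (0:ℝ) T, 0 < (t:ℝ) → ENNReal.ofReal ((t:ℝ) ^ lam) ≠ 0 :=
    fun t ht => (ENNReal.ofReal_pos.mpr (Real.rpow_pos_of_pos ht lam)).ne'
  have hc_top : ∀ t : Set.Icc (0:ℝ) T, ENNReal.ofReal ((t:ℝ) ^ lam) ≠ ∞ :=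
    fun t => ENNReal.ofReal_ne_top
  -- the Cauchy modulus
  set D : ℕ → ℝ≥0∞ := fun N => ⨆ (n : ℕ) (_ : N ≤ n) (k : ℕ) (_ : N ≤ k),
      Lnorm P T hT.le p lam (fun t ω => X n t ω - X k t ω)
        (fun t ω => X₁ n t ω - X₁ k t ω) with hDdef
  have hD_anti : Antitone D := by
    intro N M hNM
    refine iSup₂_le fun n hn => iSup₂_le fun k hk => ?_
    exact le_iSup₂_of_le n (hNM.trans hn) (le_iSup₂_of_le k (hNM.trans hk) le_rfl)
  have h0 : (⨅ N, D N) = 0 := by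
    refine le_antisymm ?_ zero_le
    rw [← hCauchy, limsup_eq_iInf_iSup_of_nat]
    exact le_iInf fun n => iInf_le_of_le n (le_iSup₂_of_le n le_rfl le_rfl)
  have hD_inf : ∀ ε : ℝ≥0∞, 0 < ε → ∃ N, D N < ε := by
    intro ε hε
    by_contra hcon
    push_neg at hcon
    exact absurd (h0 ▸ le_iInf hcon) (not_le.mpr hε)
  have hdD : ∀ {N n k : ℕ}, N ≤ n → N ≤ k →
      Lnorm P T hT.le p lam (fun t ω => X n t ω - X k t ω)
        (fun t ω => X₁ n t ω - X₁ k t ω) ≤ D N := by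
    intro N n k hn hk
    exact le_iSup₂_of_le n hn (le_iSup₂_of_le k hk le_rfl)
  have hd0 : ∀ n k : ℕ, eLpNorm (fun ω => X n t0 ω - X k t0 ω) q P ≤
      Lnorm P T hT.le p lam (fun t ω => X n t ω - X k t ω)
        (fun t ω => X₁ n t ω - X₁ k t ω) := by
    intro n k
    simp only [Lnorm]
    exact self_le_add_right _ _
  have hdt : ∀ (n k : ℕ) (t : Set.Icc (0:ℝ) T), 0 < (t:ℝ) →
      ENNReal.ofReal ((t:ℝ) ^ lam) * eLpNorm (fun ω => X₁ n t ω - X₁ k t ω) q P ≤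
      Lnorm P T hT.le p lam (fun t ω => X n t ω - X k t ω)
        (fun t ω => X₁ n t ω - X₁ k t ω) := by
    intro n k t ht
    simp only [Lnorm]
    exact le_add_self.trans' (le_iSup₂_of_le t ht le_rfl)
  -- choose a rapidly Cauchy subsequence
  obtain ⟨ψ, hψ⟩ : ∃ ψ : ℕ → ℕ, ∀ k, D (ψ k) < 2⁻¹ ^ k := by
    have hpow : ∀ k : ℕ, (0:ℝ≥0∞) < 2⁻¹ ^ k := fun k =>
      ENNReal.pow_pos (ENNReal.inv_pos.mpr ENNReal.ofNat_ne_top) k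
    choose ψ hψ using fun k => hD_inf (2⁻¹ ^ k) (hpow k)
    exact ⟨ψ, hψ⟩
  set φ : ℕ → ℕ := fun k => Nat.rec (ψ 0) (fun k ih => max (ψ (k+1)) (ih + 1)) k with hφdef
  have hφ_succ : ∀ k, φ (k+1) = max (ψ (k+1)) (φ k + 1) := fun k => rfl
  have hφ_mono : StrictMono φ := strictMono_nat_of_lt_succ fun k => by
    rw [hφ_succ]; exact lt_of_lt_of_le (Nat.lt_succ_self _) (le_max_right _ _)
  have hφψ : ∀ k, ψ k ≤ φ k := by
    intro k
    cases k with
    | zero => exact le_rfl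
    | succ k => rw [hφ_succ]; exact le_max_left _ _
  have hφD : ∀ k, D (φ k) < 2⁻¹ ^ k := fun k => lt_of_le_of_lt (hD_anti (hφψ k)) (hψ k)
  have htsum : (∑' k : ℕ, ((2:ℝ≥0∞)⁻¹) ^ k) ≠ ∞ := by
    rw [ENNReal.tsum_geometric, ENNReal.one_sub_inv_two, inv_inv]
    exact ENNReal.ofNat_ne_top
  -- a.e. convergence of the subsequence at each positive time
  have hae : ∀ (t : Set.Icc (0:ℝ) T), 0 < (t:ℝ) →
      ∀ᵐ ω ∂P, ∃ l : V₁, Tendsto (fun k => X₁ (φ k) t ω) atTop (nhds l) := by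
    intro t ht
    set c := ENNReal.ofReal ((t:ℝ) ^ lam) with hc
    refine Lp.ae_tendsto_of_cauchy_eLpNorm (f := fun k => X₁ (φ k) t)
      (fun k => (hX₁m (φ k) t ht).aestronglyMeasurable) hq1
      (B := fun N => c⁻¹ * 2⁻¹ ^ N) ?_ ?_
    · rw [ENNReal.tsum_mul_left]
      exact ENNReal.mul_ne_top (ENNReal.inv_ne_top.mpr (hc_pos t ht)) htsum
    · intro N n k hn hk
      have h1 : c * eLpNorm (fun ω => X₁ (φ n) t ω - X₁ (φ k) t ω) q P ≤ D (φ N) :=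
        le_trans (hdt (φ n) (φ k) t ht)
          (hdD (hφ_mono.monotone hn) (hφ_mono.monotone hk))
      have h2 : eLpNorm (fun ω => X₁ (φ n) t ω - X₁ (φ k) t ω) q P ≤ c⁻¹ * D (φ N) := by
        rw [← one_mul (eLpNorm (fun ω => X₁ (φ n) t ω - X₁ (φ k) t ω) q P),
          ← ENNReal.inv_mul_cancel (hc_pos t ht) (hc_top t), mul_assoc]
        exact mul_le_mul_right h1 _
      refine lt_of_le_of_lt h2 ?_
      exact (ENNReal.mul_lt_mul_iff_right (ENNReal.inv_ne_zero.mpr (hc_top t))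
        (ENNReal.inv_ne_top.mpr (hc_pos t ht))).mpr (hφD N)
  have hae0 : ∀ᵐ ω ∂P, ∃ l : V₀, Tendsto (fun k => X (φ k) t0 ω) atTop (nhds l) := by
    refine Lp.ae_tendsto_of_cauchy_eLpNorm (f := fun k => X (φ k) t0)
      (fun k => (hXm (φ k) t0).aestronglyMeasurable) hq1 (B := fun N => 2⁻¹ ^ N) htsum ?_
    intro N n k hn hk
    exact lt_of_le_of_lt (le_trans (hd0 (φ n) (φ k))
      (hdD (hφ_mono.monotone hn) (hφ_mono.monotone hk))) (hφD N)
  -- the limit processes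
  set F₁ : ℕ → Set.Icc (0:ℝ) T × Ω → V₁ := fun k qq => g (X (φ k) qq.1 qq.2) with hF₁def
  set F₀ : ℕ → Set.Icc (0:ℝ) T × Ω → V₀ := fun k qq => X (φ k) qq.1 qq.2 with hF₀def
  have hF₁m : ∀ k, Measurable[Pred 𝓕 T] (F₁ k) := fun k => hgmeas.comp (hX_pred (φ k))
  have hF₀m : ∀ k, Measurable[Pred 𝓕 T] (F₀ k) := fun k => hX_pred (φ k)
  set Z₁ : Set.Icc (0:ℝ) T × Ω → V₁ := dlim F₁ with hZ₁def
  set Z₀ : Set.Icc (0:ℝ) T × Ω → V₀ := dlim F₀ with hZ₀def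
  have hZ₁m : Measurable[Pred 𝓕 T] Z₁ := measurable_dlim (mα := Pred 𝓕 T) F₁ hF₁m
  have hZ₀m : Measurable[Pred 𝓕 T] Z₀ := measurable_dlim (mα := Pred 𝓕 T) F₀ hF₀m
  set Y : Set.Icc (0:ℝ) T → Ω → V₀ :=
    fun t ω => if (t:ℝ) = 0 then Z₀ (t, ω) else ι (Z₁ (t, ω)) with hYdef
  set Y₁ : Set.Icc (0:ℝ) T → Ω → V₁ := fun t ω => Z₁ (t, ω) with hY₁def
  -- measurability of Y
  have hzero : MeasurableSet[Pred 𝓕 T] {qq : Set.Icc (0:ℝ) T × Ω | (qq.1:ℝ) = 0} := by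
    have h1 : MeasurableSet[Pred 𝓕 T]
        {qq : Set.Icc (0:ℝ) T × Ω | 0 < (qq.1:ℝ) ∧ (qq.1:ℝ) ≤ T ∧ qq.2 ∈ (Set.univ : Set Ω)} :=
      MeasurableSpace.measurableSet_generateFrom
        (Or.inl ⟨0, T, Set.univ, le_rfl, hT, le_rfl, MeasurableSet.univ, rfl⟩)
    have h2 : {qq : Set.Icc (0:ℝ) T × Ω | (qq.1:ℝ) = 0} =
        {qq : Set.Icc (0:ℝ) T × Ω | 0 < (qq.1:ℝ) ∧ (qq.1:ℝ) ≤ T ∧ qq.2 ∈ (Set.univ : Set Ω)}ᶜ := by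
      ext qq
      simp only [Set.mem_setOf_eq, Set.mem_compl_iff, Set.mem_univ, and_true]
      constructor
      · rintro h ⟨h1', _⟩; exact h1'.ne' h
      · intro h
        by_contra hne
        exact h ⟨lt_of_le_of_ne qq.1.2.1 (Ne.symm hne), qq.1.2.2⟩
    rw [h2]; exact h1.compl
  have hYmeas : Measurable[Pred 𝓕 T] (fun qq : Set.Icc (0:ℝ) T × Ω => Y qq.1 qq.2) := by
    simp only [hYdef]
    exact Measurable.ite hzero hZ₀m (ι.continuous.measurable.comp hZ₁m)
  -- compatibility
  have hYval : ∀ (t : Set.Icc (0:ℝ) T), 0 < (t:ℝ) → ∀ ω : Ω, Y t ω = ι (Y₁ t ω) := by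
    intro t ht ω
    simp only [hYdef, hY₁def, if_neg ht.ne']
  -- a.e. tendsto towards Y
  have htd1 : ∀ (t : Set.Icc (0:ℝ) T), 0 < (t:ℝ) →
      ∀ᵐ ω ∂P, Tendsto (fun k => X₁ (φ k) t ω) atTop (nhds (Y₁ t ω)) := by
    intro t ht
    filter_upwards [hae t ht] with ω hω
    have hfun : (fun k => F₁ k (t, ω)) = fun k => X₁ (φ k) t ω := funext fun k => by
      simp only [hF₁def]; rw [hX_val (φ k) t ht ω, hgι]
    have h' : ∃ c : V₁, Tendsto (fun k => F₁ k (t, ω)) atTop (nhds c) := by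
      rw [hfun]; exact hω
    have h2 := tendsto_dlim h'
    rw [hfun] at h2
    exact h2
  have htd0 : ∀ᵐ ω ∂P, Tendsto (fun k => X (φ k) t0 ω) atTop (nhds (Y t0 ω)) := by
    filter_upwards [hae0] with ω hω
    have h' : ∃ c : V₀, Tendsto (fun k => F₀ k (t0, ω)) atTop (nhds c) := hω
    have h2 := tendsto_dlim h'
    have hY0 : Y t0 ω = Z₀ (t0, ω) := by simp only [hYdef, ht0, if_pos rfl]
    rw [hY0]
    exact h2
  -- measurability of Y at time 0 and of Y₁
  have hYt0meas : Measurable (Y t0) := by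
    have he : Y t0 = fun ω => Z₀ (t0, ω) := funext fun ω => by
      simp only [hYdef, ht0, if_pos rfl]
    rw [he]
    exact measurable_slice h_le hZ₀m t0
  have hY₁meas : ∀ t : Set.Icc (0:ℝ) T, Measurable (Y₁ t) := fun t =>
    measurable_slice h_le hZ₁m t
  -- Fatou-type bounds
  have hbound0 : ∀ (N n : ℕ), N ≤ n →
      eLpNorm (fun ω => X n t0 ω - Y t0 ω) q P ≤ D N := by
    intro N n hn
    have hlim : eLpNorm (fun ω => X n t0 ω - Y t0 ω) q P ≤
        atTop.liminf fun k => eLpNorm (fun ω => X n t0 ω - X (φ k) t0 ω) q P := by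
      refine Lp.eLpNorm_lim_le_liminf_eLpNorm
        (f := fun k ω => X n t0 ω - X (φ k) t0 ω)
        (fun k => ((hXm n t0).sub (hXm (φ k) t0)).aestronglyMeasurable) _ ?_
      filter_upwards [htd0] with ω hω
      exact tendsto_const_nhds.sub hω
    refine hlim.trans ?_
    refine liminf_le_of_frequently_le' (frequently_atTop.mpr fun K => ⟨max K N, le_max_left _ _, ?_⟩)
    have hφN : N ≤ φ (max K N) := le_trans (le_max_right K N) hφ_mono.le_apply
    exact le_trans (hd0 n (φ (max K N))) (hdD hn hφN)
  have hboundt : ∀ (N n : ℕ), N ≤ n → ∀ (t : Set.Icc (0:ℝ) T), 0 < (t:ℝ) →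
      ENNReal.ofReal ((t:ℝ) ^ lam) * eLpNorm (fun ω => X₁ n t ω - Y₁ t ω) q P ≤ D N := by
    intro N n hn t ht
    set c := ENNReal.ofReal ((t:ℝ) ^ lam) with hc
    have hlim : eLpNorm (fun ω => X₁ n t ω - Y₁ t ω) q P ≤
        atTop.liminf fun k => eLpNorm (fun ω => X₁ n t ω - X₁ (φ k) t ω) q P := by
      refine Lp.eLpNorm_lim_le_liminf_eLpNorm
        (f := fun k ω => X₁ n t ω - X₁ (φ k) t ω)
        (fun k => ((hX₁m n t ht).sub (hX₁m (φ k) t ht)).aestronglyMeasurable) _ ?_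
      filter_upwards [htd1 t ht] with ω hω
      exact tendsto_const_nhds.sub hω
    have hlim2 : (atTop.liminf fun k => eLpNorm (fun ω => X₁ n t ω - X₁ (φ k) t ω) q P) ≤
        c⁻¹ * D N := by
      refine liminf_le_of_frequently_le'
        (frequently_atTop.mpr fun K => ⟨max K N, le_max_left _ _, ?_⟩)
      have hφN : N ≤ φ (max K N) := le_trans (le_max_right K N) hφ_mono.le_apply
      have h1 : c * eLpNorm (fun ω => X₁ n t ω - X₁ (φ (max K N)) t ω) q P ≤ D N :=
        le_trans (hdt n (φ (max K N)) t ht) (hdD hn hφN)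
      rw [← one_mul (eLpNorm (fun ω => X₁ n t ω - X₁ (φ (max K N)) t ω) q P),
        ← ENNReal.inv_mul_cancel (hc_pos t ht) (hc_top t), mul_assoc]
      exact mul_le_mul_right h1 _
    calc c * eLpNorm (fun ω => X₁ n t ω - Y₁ t ω) q P
        ≤ c * (c⁻¹ * D N) := mul_le_mul_right (hlim.trans hlim2) _
      _ = D N := by rw [← mul_assoc, ENNReal.mul_inv_cancel (hc_pos t ht) (hc_top t), one_mul]
  have hLbound : ∀ (N n : ℕ), N ≤ n →
      Lnorm P T hT.le p lam (fun t ω => X n t ω - Y t ω)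
        (fun t ω => X₁ n t ω - Y₁ t ω) ≤ D N + D N := by
    intro N n hn
    simp only [Lnorm]
    exact add_le_add (hbound0 N n hn) (iSup₂_le fun t ht => hboundt N n hn t ht)
  -- finiteness of the limit norm
  obtain ⟨N₁, hN₁⟩ := hD_inf 1 zero_lt_one
  have hfin := hX_fin N₁
  rw [Lnorm] at hfin
  have hA : eLpNorm (X N₁ ⟨0, Set.left_mem_Icc.mpr hT.le⟩) q P < ⊤ :=
    lt_of_le_of_lt (self_le_add_right _ _) hfin
  have hB : (⨆ (t : Set.Icc (0:ℝ) T) (_ : 0 < (t:ℝ)),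
      ENNReal.ofReal ((t:ℝ) ^ lam) * eLpNorm (X₁ N₁ t) q P) < ⊤ :=
    lt_of_le_of_lt le_add_self hfin
  have hYfin : Lnorm P T hT.le p lam Y Y₁ < ⊤ := by
    rw [Lnorm]
    rw [ENNReal.add_lt_top]
    constructor
    · have h1 : eLpNorm (Y t0) q P =
          eLpNorm ((fun ω => X N₁ t0 ω) - fun ω => X N₁ t0 ω - Y t0 ω) q P :=
        eLpNorm_congr_ae (Filter.Eventually.of_forall fun ω => (sub_sub_cancel _ _).symm)
      refine lt_of_le_of_lt (le_of_eq h1) ?_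
      refine lt_of_le_of_lt (eLpNorm_sub_le (hXm N₁ t0).aestronglyMeasurable
        ((hXm N₁ t0).sub hYt0meas).aestronglyMeasurable hq1) ?_
      exact ENNReal.add_lt_top.mpr ⟨hA, lt_of_le_of_lt (hbound0 N₁ N₁ le_rfl)
        (hN₁.trans_le le_top)⟩
    · refine lt_of_le_of_lt (iSup₂_le fun t ht => ?_)
        (show (⨆ (t : Set.Icc (0:ℝ) T) (_ : 0 < (t:ℝ)),
          ENNReal.ofReal ((t:ℝ) ^ lam) * eLpNorm (X₁ N₁ t) q P) + D N₁ < ⊤ from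
          ENNReal.add_lt_top.mpr ⟨hB, hN₁.trans_le le_top⟩)
      have h1 : eLpNorm (Y₁ t) q P =
          eLpNorm ((fun ω => X₁ N₁ t ω) - fun ω => X₁ N₁ t ω - Y₁ t ω) q P :=
        eLpNorm_congr_ae (Filter.Eventually.of_forall fun ω => (sub_sub_cancel _ _).symm)
      calc ENNReal.ofReal ((t:ℝ) ^ lam) * eLpNorm (Y₁ t) q P
          ≤ ENNReal.ofReal ((t:ℝ) ^ lam) *
            (eLpNorm (X₁ N₁ t) q P + eLpNorm (fun ω => X₁ N₁ t ω - Y₁ t ω) q P) := by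
            rw [h1]
            exact mul_le_mul_right (eLpNorm_sub_le (hX₁m N₁ t ht).aestronglyMeasurable
              ((hX₁m N₁ t ht).sub (hY₁meas t)).aestronglyMeasurable hq1) _
        _ = ENNReal.ofReal ((t:ℝ) ^ lam) * eLpNorm (X₁ N₁ t) q P +
            ENNReal.ofReal ((t:ℝ) ^ lam) * eLpNorm (fun ω => X₁ N₁ t ω - Y₁ t ω) q P := by
            rw [mul_add]
        _ ≤ (⨆ (t : Set.Icc (0:ℝ) T) (_ : 0 < (t:ℝ)),
              ENNReal.ofReal ((t:ℝ) ^ lam) * eLpNorm (X₁ N₁ t) q P) + D N₁ :=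
            add_le_add (le_iSup₂_of_le t ht le_rfl) (hboundt N₁ N₁ le_rfl t ht)
  -- the convergence
  have hconv : Filter.limsup (fun N : ℕ =>
      Lnorm P T hT.le p lam (fun t ω => X N t ω - Y t ω)
        (fun t ω => X₁ N t ω - Y₁ t ω)) Filter.atTop = 0 := by
    refine le_antisymm ?_ zero_le
    refine ENNReal.le_of_forall_pos_le_add fun ε hε _ => ?_
    rw [zero_add]
    obtain ⟨N, hN⟩ := hD_inf ((ε : ℝ≥0∞) / 2)
      (ENNReal.div_pos (by exact_mod_cast hε.ne') ENNReal.ofNat_ne_top)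
    refine limsup_le_of_le (by isBoundedDefault) ?_
    filter_upwards [eventually_ge_atTop N] with n hn
    calc Lnorm P T hT.le p lam (fun t ω => X n t ω - Y t ω)
          (fun t ω => X₁ n t ω - Y₁ t ω) ≤ D N + D N := hLbound N n hn
      _ ≤ (ε : ℝ≥0∞) / 2 + (ε : ℝ≥0∞) / 2 := add_le_add hN.le hN.le
      _ = (ε : ℝ≥0∞) := ENNReal.add_halves _
  exact ⟨Y, Y₁, hYmeas, hYval, hYfin, hconv⟩
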